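/- For integers N_H ≥ 1 and f ≥ 1, the number z(N_H, f) of N_H × f stopping matrices satisfies the recursion z(N_H, f) = N_H^f − Σ_{i=1}^{min(N_H, f)} i! · C(N_H, i) · C(f, i) · z(N_H − i, f − i), where C(·,·) denotes the binomial coefficient. -/

import Mathlib

/-- The weight of row `i` of a binary matrix `F`: the number of nonzero entries in row `i`. -/
def rowWeight {m n : ℕ} (F : Matrix (Fin m) (Fin n) Bool) (i : Fin m) : ℕ :=
  (Finset.univ.filter (fun j => F i j = true)).card

/-- The weight of column `j` of a binary matrix `F`: the number of nonzero entries in column `j`. -/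
def colWeight {m n : ℕ} (F : Matrix (Fin m) (Fin n) Bool) (j : Fin n) : ℕ :=
  (Finset.univ.filter (fun i => F i j = true)).card

/-- A binary matrix is column-regular if every column contains exactly one nonzero entry. -/
def ColRegular {m n : ℕ} (F : Matrix (Fin m) (Fin n) Bool) : Prop :=
  ∀ j, colWeight F j = 1

/-- A stopping matrix: a column-regular binary matrix with no row of weight one. -/
def IsStopping {m n : ℕ} (F : Matrix (Fin m) (Fin n) Bool) : Prop :=
  ColRegular F ∧ ∀ i, rowWeight F i ≠ 1

instance {m n : ℕ} (F : Matrix (Fin m) (Fin n) Bool) : Decidable (ColRegular F) :=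
  inferInstanceAs (Decidable (∀ j, colWeight F j = 1))

instance {m n : ℕ} (F : Matrix (Fin m) (Fin n) Bool) : Decidable (IsStopping F) :=
  inferInstanceAs (Decidable (ColRegular F ∧ ∀ i, rowWeight F i ≠ 1))

/-- `z m n` is the number of `m × n` stopping matrices. -/
def z (m n : ℕ) : ℕ :=
  Fintype.card {F : Matrix (Fin m) (Fin n) Bool // IsStopping F}

/-- `Psi h e b` is the number of `h`-tuples `(C 1, …, C h)` of subsets of a fixed
`e`-element set with `|C i| = b i` for every `i` and whose union is the whole set. -/
def Psi (h e : ℕ) (b : Fin h → ℕ) : ℕ :=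
  Fintype.card {C : Fin h → Finset (Fin e) //
    (∀ i, (C i).card = b i) ∧ Finset.univ.biUnion C = Finset.univ}

/-- In a column-regular matrix, column `j` is pivotal if the (unique) row containing the
nonzero entry of column `j` has weight one. -/
def Pivotal {m n : ℕ} (F : Matrix (Fin m) (Fin n) Bool) (j : Fin n) : Prop :=
  ∃ i, F i j = true ∧ rowWeight F i = 1

instance {m n : ℕ} (F : Matrix (Fin m) (Fin n) Bool) (j : Fin n) : Decidable (Pivotal F j) :=
  inferInstanceAs (Decidable (∃ i, F i j = true ∧ rowWeight F i = 1))

/-- Given an `h`-tuple of matrices, column `j` is initially extractable if it is pivotal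
in at least one matrix of the tuple. -/
def Extractable {m n h : ℕ} (G : Fin h → Matrix (Fin m) (Fin n) Bool) (j : Fin n) : Prop :=
  ∃ i, Pivotal (G i) j

instance {m n h : ℕ} (G : Fin h → Matrix (Fin m) (Fin n) Bool) (j : Fin n) :
    Decidable (Extractable G j) :=
  inferInstanceAs (Decidable (∃ i, Pivotal (G i) j))

/-- The count `Θ(N_H, f, h, e)` from Lemma 2. -/
def Theta (NH f h e : ℕ) : ℕ :=
  f.choose e * ∑ b ∈ Fintype.piFinset (fun _ : Fin h => Finset.range (e + 1)),
    Psi h e b * ∏ i, (NH.choose (b i) * (b i).factorial * z (NH - b i) (f - b i))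

open Finset

section Aux
variable {α β α' β' : Type*}

/-- fiber cardinality of `g` at `b` -/
def fibc [Fintype α] [DecidableEq β] (g : α → β) (b : β) : ℕ :=
  #(univ.filter (fun a => g a = b))

/-- no fiber has cardinality one -/
def Good [Fintype α] [DecidableEq β] (g : α → β) : Prop := ∀ b, fibc g b ≠ 1

instance [Fintype α] [Fintype β] [DecidableEq β] (g : α → β) : Decidable (Good g) :=
  inferInstanceAs (Decidable (∀ b, fibc g b ≠ 1))

/-- the number of `Good` functions `α → β` -/
noncomputable def gcount (α β : Type*) [Fintype α] [DecidableEq β] : ℕ :=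
  Nat.card {g : α → β // Good g}

lemma fibc_equiv [Fintype α] [Fintype α'] [DecidableEq β] [DecidableEq β']
    (eα : α ≃ α') (eβ : β ≃ β') (g : α → β) (b : β) :
    fibc (fun a' => eβ (g (eα.symm a'))) (eβ b) = fibc g b := by
  unfold fibc
  exact Finset.card_nbij' eα.symm eα (by intro a ha; simp_all) (by intro a ha; simp_all)
    (by intro a ha; simp_all) (by intro a ha; simp_all)

lemma good_equiv [Fintype α] [Fintype α'] [DecidableEq β] [DecidableEq β']
    (eα : α ≃ α') (eβ : β ≃ β') (g : α → β) :
    Good (fun a' => eβ (g (eα.symm a'))) ↔ Good g := by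
  constructor
  · intro h b
    have := h (eβ b)
    rwa [fibc_equiv] at this
  · intro h b'
    rw [← eβ.apply_symm_apply b', fibc_equiv]
    exact h _

lemma gcount_congr [Fintype α] [DecidableEq β] [Fintype α'] [DecidableEq β']
    (eα : α ≃ α') (eβ : β ≃ β') : gcount α β = gcount α' β' := by
  apply Nat.card_congr
  refine Equiv.subtypeEquiv (eα.arrowCongr eβ) (fun g => ?_)
  have : (eα.arrowCongr eβ) g = fun a' => eβ (g (eα.symm a')) := rfl
  rw [this, good_equiv]

end Aux

/-- `z` in functional form -/
noncomputable def zf (m n : ℕ) : ℕ := gcount (Fin n) (Fin m)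

/-- the matrix associated with a function -/
def MOf {m n : ℕ} (g : Fin n → Fin m) : Matrix (Fin m) (Fin n) Bool :=
  fun i j => decide (g j = i)

lemma MOf_colWeight {m n : ℕ} (g : Fin n → Fin m) (j : Fin n) :
    colWeight (MOf g) j = 1 := by
  unfold colWeight MOf
  simp only [decide_eq_true_eq]
  rw [show (univ.filter fun i => g j = i) = {g j} by ext i; simp [eq_comm]]
  simp

lemma MOf_rowWeight {m n : ℕ} (g : Fin n → Fin m) (i : Fin m) :
    rowWeight (MOf g) i = fibc g i := by
  unfold rowWeight MOf fibc
  simp only [decide_eq_true_eq]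

lemma z_eq (m n : ℕ) : z m n = zf m n := by
  unfold z zf gcount
  rw [← Nat.card_eq_fintype_card]
  symm
  refine Nat.card_congr (Equiv.ofBijective
    (fun p : {g : Fin n → Fin m // Good g} =>
      (⟨MOf p.1, fun j => MOf_colWeight p.1 j, fun i => by rw [MOf_rowWeight]; exact p.2 i⟩ :
        {F : Matrix (Fin m) (Fin n) Bool // IsStopping F})) ?_)
  constructor
  · rintro ⟨g, hg⟩ ⟨g', hg'⟩ h
    simp only [Subtype.mk_eq_mk] at h ⊢
    funext j
    have := congrFun (congrFun (congrArg Subtype.val h) (g j)) j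
    simp [MOf] at this
    exact this.symm
  · rintro ⟨F, hF⟩
    have h : ∀ j, ∃ a, univ.filter (fun i => F i j = true) = {a} := by
      intro j
      exact Finset.card_eq_one.mp (hF.1 j)
    choose g hg using h
    have key : ∀ i j, F i j = true ↔ g j = i := by
      intro i j
      constructor
      · intro h
        have : i ∈ univ.filter (fun i => F i j = true) := by simp [h]
        rw [hg j] at this
        simpa [eq_comm] using this
      · rintro rfl
        have : g j ∈ ({g j} : Finset (Fin m)) := mem_singleton_self _
        rw [← hg j] at this
        simpa using this
    refine ⟨⟨g, ?_⟩, ?_⟩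
    · intro i
      have : fibc g i = rowWeight F i := by
        unfold fibc rowWeight
        congr 1
        ext j
        simp [key]
      rw [this]
      exact hF.2 i
    · simp only [Subtype.mk_eq_mk]
      apply Subtype.ext
      funext i j
      unfold MOf
      rcases Bool.eq_false_or_eq_true (F i j) with h | h <;>
        simp [h, key i j, ← key i j]

lemma nat_card_sigma {ι : Type*} [Fintype ι] (f : ι → Type*) [∀ i, Finite (f i)] :
    Nat.card (Σ i, f i) = ∑ i, Nat.card (f i) := by
  letI := fun i => Fintype.ofFinite (f i)
  simp [Nat.card_eq_fintype_card, Fintype.card_sigma]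

section Main
variable {m n : ℕ}

/-- the set of output values with fiber of size exactly one -/
def Sset (g : Fin n → Fin m) : Finset (Fin m) := univ.filter (fun b => fibc g b = 1)

/-- the set of inputs mapped into `s` -/
def Tmap (s : Finset (Fin m)) (g : Fin n → Fin m) : Finset (Fin n) :=
  univ.filter (fun j => g j ∈ s)

def Aprop (s : Finset (Fin m)) {T : Finset (Fin n)} (u : {x : Fin n // x ∈ T} → Fin m) : Prop :=
  (∀ j, u j ∈ s) ∧ ∀ b ∈ s, ∃! j, u j = b

def Bprop (s : Finset (Fin m)) {T : Finset (Fin n)} (v : {x : Fin n // ¬ x ∈ T} → Fin m) :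
    Prop :=
  (∀ j, v j ∉ s) ∧ ∀ b, b ∉ s → fibc v b ≠ 1

lemma fibc_mem (T : Finset (Fin n)) (g : Fin n → Fin m) (b : Fin m) :
    fibc (fun j : {x // x ∈ T} => g j) b = #(univ.filter (fun j => j ∈ T ∧ g j = b)) := by
  unfold fibc
  refine Finset.card_bij (fun a _ => a.1) ?_ ?_ ?_
  · rintro ⟨a, ha⟩ haf
    simp only [mem_filter, mem_univ, true_and] at haf ⊢
    exact ⟨ha, haf⟩
  · rintro ⟨a, ha⟩ h1 ⟨a', ha'⟩ h2 h
    exact Subtype.ext h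
  · rintro b' hb'
    simp only [mem_filter, mem_univ, true_and] at hb'
    exact ⟨⟨b', hb'.1⟩, by simp [hb'.2], rfl⟩

lemma fibc_notmem (T : Finset (Fin n)) (g : Fin n → Fin m) (b : Fin m) :
    fibc (fun j : {x : Fin n // ¬ x ∈ T} => g j) b
      = #(univ.filter (fun j => ¬ j ∈ T ∧ g j = b)) := by
  unfold fibc
  refine Finset.card_bij (fun a _ => a.1) ?_ ?_ ?_
  · rintro ⟨a, ha⟩ haf
    simp only [mem_filter, mem_univ, true_and] at haf ⊢
    exact ⟨ha, haf⟩
  · rintro ⟨a, ha⟩ h1 ⟨a', ha'⟩ h2 h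
    exact Subtype.ext h
  · rintro b' hb'
    simp only [mem_filter, mem_univ, true_and] at hb'
    exact ⟨⟨b', hb'.1⟩, by simp [hb'.2], rfl⟩

lemma fibc_split (T : Finset (Fin n)) (g : Fin n → Fin m) (b : Fin m) :
    fibc g b = fibc (fun j : {x // x ∈ T} => g j) b
      + fibc (fun j : {x : Fin n // ¬ x ∈ T} => g j) b := by
  rw [fibc_mem, fibc_notmem]
  unfold fibc
  rw [← Finset.card_filter_add_card_filter_not
    (p := fun j => j ∈ T) (s := univ.filter (fun j => g j = b))]
  congr 1 <;> · rw [filter_filter]; congr 1; ext j; simp only [mem_filter]; tauto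

lemma main_iff (s : Finset (Fin m)) (T : Finset (Fin n)) (g : Fin n → Fin m) :
    (Sset g = s ∧ Tmap s g = T) ↔
      (Aprop s (fun j : {x // x ∈ T} => g j) ∧
        Bprop s (fun j : {x : Fin n // ¬ x ∈ T} => g j)) := by
  constructor
  · rintro ⟨h1, h2⟩
    have hmem : ∀ b, b ∈ s ↔ fibc g b = 1 := by
      intro b; rw [← h1]; simp [Sset]
    have hT : ∀ j, j ∈ T ↔ g j ∈ s := by
      intro j; rw [← h2]; simp [Tmap]
    refine ⟨⟨fun j => (hT j.1).mp j.2, ?_⟩, ⟨fun j hc => j.2 ((hT j.1).mpr hc), ?_⟩⟩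
    · intro b hb
      obtain ⟨a, ha⟩ := Finset.card_eq_one.mp ((hmem b).mp hb)
      have hga : g a = b := by
        have : a ∈ univ.filter (fun x => g x = b) := ha ▸ mem_singleton_self a
        simpa [fibc] using this
      have haT : a ∈ T := (hT a).mpr (hga ▸ hb)
      refine ⟨⟨a, haT⟩, hga, ?_⟩
      rintro ⟨j, hj⟩ hgj
      have : j ∈ univ.filter (fun x => g x = b) := by simpa using hgj
      rw [show univ.filter (fun x => g x = b) = {a} from ha] at this
      exact Subtype.ext (by simpa using this)
    · intro b hb
      have hgb : fibc g b ≠ 1 := fun hc => hb ((hmem b).mpr hc)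
      have hu0 : fibc (fun j : {x // x ∈ T} => g j) b = 0 := by
        unfold fibc
        rw [Finset.card_eq_zero, Finset.filter_eq_empty_iff]
        rintro ⟨j, hj⟩ -
        exact fun hc => hb (hc ▸ (hT j).mp hj)
      intro hc
      exact hgb (by rw [fibc_split T g b, hu0, hc])
  · rintro ⟨⟨hA1, hA2⟩, hB1, hB2⟩
    have husv : ∀ b, b ∈ s → fibc g b = 1 := by
      intro b hb
      rw [fibc_split T g b]
      have hv0 : fibc (fun j : {x : Fin n // ¬ x ∈ T} => g j) b = 0 := by
        unfold fibc
        rw [Finset.card_eq_zero, Finset.filter_eq_empty_iff]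
        rintro j -
        exact fun hc => (hB1 j) (hc ▸ hb)
      have hu1 : fibc (fun j : {x // x ∈ T} => g j) b = 1 := by
        obtain ⟨j0, hgj0, huniq⟩ := hA2 b hb
        unfold fibc
        rw [Finset.card_eq_one]
        refine ⟨j0, ?_⟩
        ext x
        simp only [mem_filter, mem_univ, true_and, mem_singleton]
        exact ⟨fun hx => huniq x hx, fun hx => hx ▸ hgj0⟩
      rw [hu1, hv0]
    have hnsv : ∀ b, b ∉ s → fibc g b ≠ 1 := by
      intro b hb
      rw [fibc_split T g b]
      have hu0 : fibc (fun j : {x // x ∈ T} => g j) b = 0 := by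
        unfold fibc
        rw [Finset.card_eq_zero, Finset.filter_eq_empty_iff]
        rintro j -
        exact fun hc => hb (hc ▸ hA1 j)
      rw [hu0]
      simpa using hB2 b hb
    constructor
    · ext b
      simp only [Sset, mem_filter, mem_univ, true_and]
      exact ⟨fun h => by_contra (fun hc => hnsv b hc h), fun h => husv b h⟩
    · ext j
      simp only [Tmap, mem_filter, mem_univ, true_and]
      exact ⟨fun hj => by_contra (fun hjT => (hB1 ⟨j, hjT⟩) hj), fun hj => hA1 ⟨j, hj⟩⟩

end Main

section Main2
variable {m n : ℕ}

lemma fibc_codres {γ : Type*} [Fintype γ] {P : Fin m → Prop} (w : γ → {x : Fin m // P x})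
    (b : {x : Fin m // P x}) :
    fibc w b = fibc (fun j => (w j).1) b.1 := by
  unfold fibc
  congr 1
  ext j
  simp [Subtype.ext_iff]

lemma cardA (s : Finset (Fin m)) (T : Finset (Fin n)) :
    Nat.card {u : {x : Fin n // x ∈ T} → Fin m // Aprop s u}
      = if #T = #s then (#s).factorial else 0 := by
  have E : {u : {x : Fin n // x ∈ T} → Fin m // Aprop s u} ≃
      ({x : Fin n // x ∈ T} ≃ {b : Fin m // b ∈ s}) := by
    refine
      { toFun := fun p => Equiv.ofBijective (fun j => (⟨p.1 j, p.2.1 j⟩ : {b // b ∈ s})) ?_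
        invFun := fun e => ⟨fun j => (e j).1, fun j => (e j).2, fun b hb => ?_⟩
        left_inv := fun p => Subtype.ext (funext fun j => rfl)
        right_inv := fun e => Equiv.ext fun j => Subtype.ext rfl }
    · constructor
      · intro j j' h
        simp only [Subtype.mk_eq_mk] at h
        obtain ⟨j0, -, huniq⟩ := p.2.2 (p.1 j') (p.2.1 j')
        rw [huniq j h, huniq j' rfl]
      · rintro ⟨b, hb⟩
        obtain ⟨j0, hj0, -⟩ := p.2.2 b hb
        exact ⟨j0, Subtype.ext hj0⟩
    · refine ⟨e.symm ⟨b, hb⟩, by simp, fun y hy => ?_⟩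
      have : e y = ⟨b, hb⟩ := Subtype.ext hy
      rw [← this, Equiv.symm_apply_apply]
  rw [Nat.card_congr E]
  by_cases h : #T = #s
  · have e0 : {x : Fin n // x ∈ T} ≃ {b : Fin m // b ∈ s} :=
      (T.equivFin).trans ((finCongr h).trans s.equivFin.symm)
    rw [Nat.card_eq_fintype_card, Fintype.card_equiv e0, Fintype.card_coe, h, if_pos rfl]
  · have : IsEmpty ({x : Fin n // x ∈ T} ≃ {b : Fin m // b ∈ s}) := by
      refine ⟨fun e => h ?_⟩
      have := Fintype.card_congr e
      simpa [Fintype.card_coe] using this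
    rw [if_neg h]
    exact Nat.card_of_isEmpty

lemma cardB (s : Finset (Fin m)) (T : Finset (Fin n)) :
    Nat.card {v : {x : Fin n // ¬ x ∈ T} → Fin m // Bprop s v} = zf (m - #s) (n - #T) := by
  have E : {v : {x : Fin n // ¬ x ∈ T} → Fin m // Bprop s v} ≃
      {w : {x : Fin n // ¬ x ∈ T} → {b : Fin m // ¬ b ∈ s} // Good w} :=
    { toFun := fun p => ⟨fun j => ⟨p.1 j, p.2.1 j⟩, fun b' => by
        rw [fibc_codres]; exact p.2.2 b'.1 b'.2⟩
      invFun := fun q => ⟨fun j => (q.1 j).1, fun j => (q.1 j).2,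
        fun b hb hc => (q.2 ⟨b, hb⟩) (by rw [fibc_codres]; exact hc)⟩
      left_inv := fun p => Subtype.ext (funext fun j => rfl)
      right_inv := fun q => Subtype.ext (funext fun j => Subtype.ext rfl) }
  have eT : {x : Fin n // ¬ x ∈ T} ≃ Fin (n - #T) :=
    (Equiv.subtypeEquivRight (fun x => (Finset.mem_compl (a := x)).symm)).trans
      ((Tᶜ.equivFin).trans (finCongr (by rw [card_compl, Fintype.card_fin])))
  have es : {b : Fin m // ¬ b ∈ s} ≃ Fin (m - #s) :=
    (Equiv.subtypeEquivRight (fun x => (Finset.mem_compl (a := x)).symm)).trans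
      ((sᶜ.equivFin).trans (finCongr (by rw [card_compl, Fintype.card_fin])))
  rw [Nat.card_congr E]
  exact gcount_congr eT es

lemma card_sT (s : Finset (Fin m)) (T : Finset (Fin n)) :
    Nat.card {g : Fin n → Fin m // Sset g = s ∧ Tmap s g = T}
      = (if #T = #s then (#s).factorial else 0) * zf (m - #s) (n - #T) := by
  have E : {g : Fin n → Fin m // Sset g = s ∧ Tmap s g = T} ≃
      {u : {x : Fin n // x ∈ T} → Fin m // Aprop s u} ×
      {v : {x : Fin n // ¬ x ∈ T} → Fin m // Bprop s v} := by
    refine (Equiv.subtypeEquiv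
      (Equiv.piEquivPiSubtypeProd (fun x => x ∈ T) (fun _ => Fin m)) (fun g => ?_)).trans
      Equiv.subtypeProdEquivProd
    rw [main_iff]
    exact Iff.rfl
  rw [Nat.card_congr E, Nat.card_prod, cardA, cardB]

end Main2

section Main3
variable {m n : ℕ}

lemma card_s (s : Finset (Fin m)) :
    Nat.card {g : Fin n → Fin m // Sset g = s}
      = (#s).factorial * n.choose (#s) * zf (m - #s) (n - #s) := by
  have e1 : {g : Fin n → Fin m // Sset g = s} ≃
      Σ T : Finset (Fin n), {g : Fin n → Fin m // Sset g = s ∧ Tmap s g = T} := by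
    refine (Equiv.sigmaFiberEquiv (fun p : {g : Fin n → Fin m // Sset g = s} =>
      Tmap s p.1)).symm.trans (Equiv.sigmaCongrRight (fun T => ?_))
    exact Equiv.subtypeSubtypeEquivSubtypeInter (fun g : Fin n → Fin m => Sset g = s)
      (fun g => Tmap s g = T)
  rw [Nat.card_congr e1, nat_card_sigma]
  rw [Finset.sum_congr rfl (fun T _ => card_sT s T)]
  have h2 : ∀ T : Finset (Fin n),
      (if #T = #s then (#s).factorial else 0) * zf (m - #s) (n - #T)
        = if #T = #s then (#s).factorial * zf (m - #s) (n - #s) else 0 := by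
    intro T
    split
    · rename_i h; rw [h]
    · rw [zero_mul]
  rw [Finset.sum_congr rfl (fun T _ => h2 T), ← Finset.sum_filter]
  rw [show (univ.filter (fun T : Finset (Fin n) => #T = #s)) =
      powersetCard (#s) univ from (powersetCard_eq_filter ..).symm,
    Finset.sum_const, card_powersetCard, card_univ, Fintype.card_fin, smul_eq_mul]
  ring

end Main3

lemma count_all (m n : ℕ) :
    m ^ n = ∑ i ∈ Finset.range (m + 1),
      i.factorial * m.choose i * n.choose i * zf (m - i) (n - i) := by
  have h0 : (m : ℕ) ^ n = Nat.card (Fin n → Fin m) := by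
    rw [Nat.card_eq_fintype_card, Fintype.card_fun, Fintype.card_fin, Fintype.card_fin]
  rw [h0, Nat.card_congr (Equiv.sigmaFiberEquiv (Sset (m := m) (n := n))).symm, nat_card_sigma]
  rw [Finset.sum_congr rfl (fun s _ => card_s s)]
  rw [show (univ : Finset (Finset (Fin m))) = (univ : Finset (Fin m)).powerset from
    Finset.powerset_univ.symm]
  rw [Finset.sum_powerset, card_univ, Fintype.card_fin]
  refine Finset.sum_congr rfl (fun i _ => ?_)
  have : ∀ s ∈ powersetCard i (univ : Finset (Fin m)),
      (#s).factorial * n.choose (#s) * zf (m - #s) (n - #s)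
        = i.factorial * n.choose i * zf (m - i) (n - i) := by
    intro s hs
    rw [Finset.mem_powersetCard_univ] at hs
    rw [hs]
  rw [Finset.sum_congr rfl this, Finset.sum_const, card_powersetCard, card_univ,
    Fintype.card_fin, smul_eq_mul]
  ring

theorem key_nat (NH f : ℕ) :
    NH ^ f = z NH f + ∑ i ∈ Finset.Icc 1 (min NH f),
      i.factorial * NH.choose i * f.choose i * z (NH - i) (f - i) := by
  have key := count_all NH f
  rw [Finset.range_eq_Ico,
    ← Finset.sum_Ico_consecutive _ (by omega : 0 ≤ 1) (by omega : 1 ≤ NH + 1)] at key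
  rw [show Finset.Ico 0 1 = {0} from rfl, Finset.sum_singleton] at key
  simp only [Nat.factorial_zero, Nat.choose_zero_right, Nat.sub_zero, one_mul] at key
  rw [Finset.Ico_add_one_right_eq_Icc] at key
  have hsub : ∑ i ∈ Finset.Icc 1 (min NH f),
      i.factorial * NH.choose i * f.choose i * zf (NH - i) (f - i)
      = ∑ i ∈ Finset.Icc 1 NH,
      i.factorial * NH.choose i * f.choose i * zf (NH - i) (f - i) := by
    refine Finset.sum_subset ?_ ?_
    · intro i hi
      simp only [Finset.mem_Icc] at hi ⊢
      omega
    · intro i hi hni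
      simp only [Finset.mem_Icc] at hi hni
      have : f < i := by omega
      rw [Nat.choose_eq_zero_of_lt this]
      ring
  rw [← hsub] at key
  rw [key, z_eq]
  congr 1
  refine Finset.sum_congr rfl (fun i _ => ?_)
  rw [z_eq]

/-- For `N_H ≥ 1` and `f ≥ 1`, the number `z(N_H, f)` of `N_H × f`
stopping matrices satisfies
`z(N_H, f) = N_H^f − Σ_{i=1}^{min(N_H,f)} i! · C(N_H,i) · C(f,i) · z(N_H−i, f−i)`. -/
theorem stopping_matrix_recursion (NH f : ℕ) (hNH : 1 ≤ NH) (hf : 1 ≤ f) :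
    (z NH f : ℤ) =
      (NH : ℤ) ^ f -
        ∑ i ∈ Finset.Icc 1 (min NH f),
          (i.factorial : ℤ) * (NH.choose i : ℤ) * (f.choose i : ℤ) *
            (z (NH - i) (f - i) : ℤ) := by
  have h := key_nat NH f
  have h2 := congrArg (Nat.cast (R := ℤ)) h
  push_cast at h2
  linarith
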